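/- A 2-segment is a set of integers of the form σ = {l, l+2, l+4, …, l+2k} for some l ∈ ℤ, k ≥ 0. Two 2-segments are in special position if their union is a 2-segment properly containing each of them. Then every finitely supported function u : ℤ → ℕ (a finite multiset of integers with multiplicities) can be written in exactly one way as a finite sum of indicator functions of 2-segments σ_1, …, σ_R (i.e. u = Σ_j 1_{σ_j}, as a multiset {σ_1,…,σ_R}) such that no two of the σ_j are in special position. -/
import Mathlib

/-- A 2-segment: a set of the form `{l, l+2, …, l+2k}`. -/
def IsTwoSegment (σ : Finset ℤ) : Prop :=
  ∃ (l : ℤ) (k : ℕ), σ = (Finset.range (k + 1)).image fun j : ℕ => l + 2 * (j : ℤ)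

/-- Two 2-segments are in special position if their union is a 2-segment properly
containing each of them. -/
def SpecialPosition (σ₁ σ₂ : Finset ℤ) : Prop :=
  IsTwoSegment (σ₁ ∪ σ₂) ∧ σ₁ ∪ σ₂ ≠ σ₁ ∧ σ₁ ∪ σ₂ ≠ σ₂

namespace TwoSegAux

def Seg (l : ℤ) (k : ℕ) : Finset ℤ :=
  (Finset.range (k + 1)).image fun j : ℕ => l + 2 * (j : ℤ)

lemma isTwoSegment_Seg (l : ℤ) (k : ℕ) : IsTwoSegment (Seg l k) := ⟨l, k, rfl⟩

lemma mem_Seg {n l : ℤ} {k : ℕ} : n ∈ Seg l k ↔ l ≤ n ∧ n ≤ l + 2 * k ∧ 2 ∣ (n - l) := by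
  simp only [Seg, Finset.mem_image, Finset.mem_range, Nat.lt_succ_iff]
  constructor
  · rintro ⟨j, hj, rfl⟩
    have : (j : ℤ) ≤ (k : ℤ) := Int.ofNat_le.mpr hj
    refine ⟨by omega, by omega, ⟨j, by ring⟩⟩
  · rintro ⟨h1, h2, d, hd⟩
    have hd0 : 0 ≤ d := by omega
    refine ⟨d.toNat, ?_, ?_⟩
    · omega
    · omega

lemma specialPosition_symm {σ₁ σ₂ : Finset ℤ} (h : SpecialPosition σ₁ σ₂) :
    SpecialPosition σ₂ σ₁ := by
  obtain ⟨hseg, h1, h2⟩ := h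
  rw [Finset.union_comm] at hseg h1 h2
  exact ⟨hseg, h2, h1⟩

/-- Normalization: a 2-segment whose maximum is `m`. -/
lemma seg_top {σ : Finset ℤ} (hσ : IsTwoSegment σ) {m : ℤ} (hm : m ∈ σ)
    (hle : ∀ n ∈ σ, n ≤ m) : ∃ j : ℕ, σ = Seg (m - 2 * j) j := by
  obtain ⟨a, k, rfl⟩ := hσ
  have hm' : a ≤ m ∧ m ≤ a + 2 * k ∧ 2 ∣ (m - a) := mem_Seg.mp hm
  have htop : a + 2 * k ≤ m := hle _ (mem_Seg.mpr ⟨by omega, by omega, ⟨k, by ring⟩⟩)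
  refine ⟨k, ?_⟩
  have : (m - 2 * k : ℤ) = a := by omega
  rw [this]; rfl

/-- Key non-special-position lemma: a segment whose elements all lie in the support of `u`
and are `≤ m` is never in special position with the top run `Seg (m - 2k₀) k₀`, provided
`u (m - 2(k₀+1)) = 0`. -/
lemma notSpecial_top (u : ℤ →₀ ℕ) (m : ℤ) (k₀ : ℕ)
    (hgap : u (m - 2 * (k₀ + 1)) = 0) (σ : Finset ℤ)
    (hσ : ∀ n ∈ σ, u n ≠ 0 ∧ n ≤ m) :
    ¬ SpecialPosition σ (Seg (m - 2 * k₀) k₀) := by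
  rintro ⟨⟨a, t, hU⟩, -, hne2⟩
  set l₀ : ℤ := m - 2 * k₀ with hl₀
  set R : Finset ℤ := Seg l₀ k₀ with hR
  set U : Finset ℤ := σ ∪ R with hUdef
  have hmR : m ∈ R := mem_Seg.mpr ⟨by omega, by omega, ⟨k₀, by ring⟩⟩
  have hmU : m ∈ U := Finset.mem_union_right _ hmR
  have hUle : ∀ n ∈ U, n ≤ m := by
    intro n hn
    rcases Finset.mem_union.mp hn with h | h
    · exact (hσ n h).2
    · have := mem_Seg.mp h; omega
  -- With hU : U = image..., i.e. U = Seg a t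
  have hUSeg : U = Seg a t := hU
  have hmSeg : a ≤ m ∧ m ≤ a + 2 * t ∧ 2 ∣ (m - a) := mem_Seg.mp (hUSeg ▸ hmU)
  have htopU : a + 2 * t ≤ m := by
    apply hUle
    rw [hUSeg]
    exact mem_Seg.mpr ⟨by omega, by omega, ⟨t, by ring⟩⟩
  -- R ⊆ U and U ≠ R, so there's x ∈ U \ R
  have hRU : R ⊆ U := Finset.subset_union_right
  obtain ⟨x, hxU, hxR⟩ := Finset.exists_of_ssubset (lt_of_le_of_ne hRU (fun h => hne2 h.symm))
  have hx : a ≤ x ∧ x ≤ a + 2 * t ∧ 2 ∣ (x - a) := mem_Seg.mp (hUSeg ▸ hxU)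
  have hxR' : ¬ (l₀ ≤ x ∧ x ≤ l₀ + 2 * k₀ ∧ 2 ∣ (x - l₀)) := fun h => hxR (mem_Seg.mpr h)
  have hxlt : x ≤ l₀ - 2 := by
    rcases hmSeg.2.2 with ⟨d, hd⟩
    rcases hx.2.2 with ⟨e, he⟩
    omega
  have hmem2 : (l₀ - 2 : ℤ) ∈ U := by
    rw [hUSeg]
    rcases hmSeg.2.2 with ⟨d, hd⟩
    rcases hx.2.2 with ⟨e, he⟩
    exact mem_Seg.mpr ⟨by omega, by omega, by omega⟩
  rcases Finset.mem_union.mp hmem2 with h | h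
  · have := (hσ _ h).1
    have heq : (l₀ - 2 : ℤ) = m - 2 * (k₀ + 1) := by omega
    rw [heq] at this
    exact this hgap
  · have := mem_Seg.mp h; omega


lemma mem_supp_of_mem {u : ℤ →₀ ℕ} {T : Multiset (Finset ℤ)}
    (hsum : ∀ n : ℤ, u n = (T.map fun σ => if n ∈ σ then 1 else 0).sum)
    {σ : Finset ℤ} (hσT : σ ∈ T) {n : ℤ} (hn : n ∈ σ) : u n ≠ 0 := by
  have h1 : (if n ∈ σ then 1 else 0) ∈ T.map fun σ => if n ∈ σ then (1:ℕ) else 0 :=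
    Multiset.mem_map_of_mem _ hσT
  rw [if_pos hn] at h1
  have := Multiset.single_le_sum (fun x _ => Nat.zero_le x) _ h1
  rw [hsum n]
  omega


/-- In any valid decomposition of `u`, the maximal top run belongs to the decomposition. -/
lemma R_mem (u : ℤ →₀ ℕ) (m : ℤ) (k₀ : ℕ)
    (hmax : ∀ n : ℤ, u n ≠ 0 → n ≤ m)
    (hrun : ∀ i : ℕ, i ≤ k₀ → u (m - 2 * i) ≠ 0)
    (hgap : u (m - 2 * (k₀ + 1)) = 0)
    (T : Multiset (Finset ℤ))
    (hseg : ∀ σ ∈ T, IsTwoSegment σ)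
    (hsum : ∀ n : ℤ, u n = (T.map fun σ => if n ∈ σ then 1 else 0).sum)
    (hns : ∀ σ₁ ∈ T, ∀ σ₂ ∈ T, ¬ SpecialPosition σ₁ σ₂) :
    Seg (m - 2 * k₀) k₀ ∈ T := by
  -- every element of a member segment is in the support
  have hmem : ∀ σ ∈ T, ∀ n ∈ σ, u n ≠ 0 := by
    intro σ hσT n hn
    have h1 : (if n ∈ σ then 1 else 0) ∈ T.map fun σ => if n ∈ σ then (1:ℕ) else 0 :=
      Multiset.mem_map_of_mem _ hσT
    rw [if_pos hn] at h1
    have := Multiset.single_le_sum (fun x _ => Nat.zero_le x) _ h1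
    rw [hsum n]
    omega
  have hexists : ∀ n : ℤ, u n ≠ 0 → ∃ σ ∈ T, n ∈ σ := by
    intro n hn
    by_contra h
    push_neg at h
    apply hn
    rw [hsum n]
    apply Multiset.sum_eq_zero
    intro x hx
    obtain ⟨σ, hσT, rfl⟩ := Multiset.mem_map.mp hx
    exact if_neg (h σ hσT)
  -- every segment in T containing m is a top run Seg (m-2j) j with j ≤ k₀
  have htop : ∀ σ ∈ T, m ∈ σ → ∃ j : ℕ, j ≤ k₀ ∧ σ = Seg (m - 2 * j) j := by
    intro σ hσT hmσ
    obtain ⟨j, rfl⟩ := seg_top (hseg σ hσT) hmσ (fun n hn => hmax n (hmem σ hσT n hn))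
    refine ⟨j, ?_, rfl⟩
    by_contra hj
    push_neg at hj
    have : (m - 2 * (k₀ + 1) : ℤ) ∈ Seg (m - 2 * j) j := by
      refine mem_Seg.mpr ⟨by omega, by omega, by omega⟩
    exact (hmem _ hσT _ this) hgap
  -- pick the greatest j with Seg (m-2j) j ∈ T
  have hm0 : u m ≠ 0 := by have := hrun 0 (Nat.zero_le _); simpa using this
  obtain ⟨σ₀, hσ₀T, hmσ₀⟩ := hexists m hm0
  obtain ⟨j₀, hj₀k, hj₀⟩ := htop σ₀ hσ₀T hmσ₀
  classical
  set P : ℕ → Prop := fun j => Seg (m - 2 * j) j ∈ T with hP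
  have hPj₀ : P j₀ := show Seg (m - 2 * j₀) j₀ ∈ T from hj₀ ▸ hσ₀T
  set js : ℕ := Nat.findGreatest P k₀ with hjs
  have hPjs : P js := Nat.findGreatest_spec hj₀k hPj₀
  have hjsle : js ≤ k₀ := Nat.findGreatest_le k₀
  -- claim js = k₀
  rcases eq_or_lt_of_le hjsle with heq | hlt
  · exact heq ▸ hPjs
  exfalso
  set a : ℤ := m - 2 * js with ha
  have hσs : Seg a js ∈ T := hPjs
  -- a - 2 is still in the support
  have ha2 : u (a - 2) ≠ 0 := by
    have := hrun (js + 1) (by omega)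
    have heq : (m - 2 * ((js : ℕ) + 1 : ℕ) : ℤ) = a - 2 := by push_cast; omega
    rwa [heq] at this
  obtain ⟨τ, hτT, hτmem⟩ := hexists _ ha2
  obtain ⟨b, i, rfl⟩ := hseg τ hτT
  have hτS : ((Finset.range (i + 1)).image fun j : ℕ => b + 2 * (j : ℤ)) = Seg b i := rfl
  rw [show ((Finset.range (i + 1)).image fun j : ℕ => b + 2 * (j : ℤ)) = Seg b i from rfl]
    at hτT hτmem
  have hb : b ≤ a - 2 ∧ a - 2 ≤ b + 2 * i ∧ 2 ∣ (a - 2 - b) := mem_Seg.mp hτmem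
  have hcle : b + 2 * (i : ℤ) ≤ m :=
    hmax _ (hmem _ hτT _ (mem_Seg.mpr ⟨by omega, le_refl _, ⟨i, by ring⟩⟩))
  have hmτ : m ∉ Seg b i := by
    intro hmem'
    obtain ⟨i', hi'k, heq⟩ := htop _ hτT hmem'
    have hi'T : P i' := show Seg (m - 2 * i') i' ∈ T from heq ▸ hτT
    have : i' ≤ js := Nat.le_findGreatest hi'k hi'T
    rw [heq] at hτmem
    have := mem_Seg.mp hτmem
    omega
  have hb3 : 2 ∣ (a - 2 - b) := hb.2.2
  have hdvd : 2 ∣ (m - b) := by omega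
  set kb : ℕ := ((m - b) / 2).toNat with hkb
  have hbm : b ≤ m := by omega
  have h2kb : 2 * (kb : ℤ) = m - b := by omega
  have hext : Seg b i ∪ Seg a js = Seg b kb := by
    ext n
    simp only [Finset.mem_union, mem_Seg]
    omega
  -- Seg b i and Seg a js are in special position: contradiction
  apply hns _ hτT _ hσs
  refine ⟨⟨b, kb, hext⟩, ?_, ?_⟩
  · rw [hext]
    intro hcontra
    apply hmτ
    rw [← hcontra]
    exact mem_Seg.mpr ⟨hbm, by omega, hdvd⟩

  · rw [hext]
    intro hcontra
    have : (a - 2 : ℤ) ∈ Seg a js := by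
      rw [← hcontra]
      exact mem_Seg.mpr ⟨by omega, by omega, by omega⟩
    have := mem_Seg.mp this
    omega

end TwoSegAux

open TwoSegAux in
theorem unique_two_segment_decomposition (u : ℤ →₀ ℕ) :
    ∃! S : Multiset (Finset ℤ),
      (∀ σ ∈ S, IsTwoSegment σ) ∧
      (∀ n : ℤ, u n = (S.map fun σ => if n ∈ σ then 1 else 0).sum) ∧
      (∀ σ₁ ∈ S, ∀ σ₂ ∈ S, ¬ SpecialPosition σ₁ σ₂) := by
  classical
  suffices H : ∀ N : ℕ, ∀ u : ℤ →₀ ℕ, (u.sum fun _ v => v) = N →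
      ∃! S : Multiset (Finset ℤ),
        (∀ σ ∈ S, IsTwoSegment σ) ∧
        (∀ n : ℤ, u n = (S.map fun σ => if n ∈ σ then 1 else 0).sum) ∧
        (∀ σ₁ ∈ S, ∀ σ₂ ∈ S, ¬ SpecialPosition σ₁ σ₂) from H _ u rfl
  intro N
  induction N using Nat.strong_induction_on with
  | _ N IH =>
  intro u hN
  by_cases hu0 : u = 0
  · subst hu0
    refine ⟨0, ⟨by simp, by simp, by simp⟩, ?_⟩
    rintro T ⟨hseg, hsum, -⟩
    by_contra hT
    obtain ⟨σ, hσ⟩ := Multiset.exists_mem_of_ne_zero hT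
    obtain ⟨l, k, rfl⟩ := hseg σ hσ
    have hl : l ∈ Seg l k := mem_Seg.mpr ⟨le_refl _, by omega, ⟨0, by ring⟩⟩
    exact mem_supp_of_mem hsum hσ hl rfl
  · have hsupp : u.support.Nonempty := Finsupp.support_nonempty_iff.mpr hu0
    set m := u.support.max' hsupp with hm
    have hmax : ∀ n : ℤ, u n ≠ 0 → n ≤ m := fun n hn =>
      Finset.le_max' _ n (Finsupp.mem_support_iff.mpr hn)
    have hum : u m ≠ 0 := Finsupp.mem_support_iff.mp (u.support.max'_mem hsupp)
    have hexj : ∃ j : ℕ, u (m - 2 * (j + 1)) = 0 := by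
      refine ⟨(m - u.support.min' hsupp).toNat, ?_⟩
      by_contra h
      have h1 := Finset.min'_le _ _ (Finsupp.mem_support_iff.mpr h)
      have h2 := Finset.min'_le _ _ (u.support.max'_mem hsupp)
      omega
    set k₀ := Nat.find hexj with hk₀
    have hgap : u (m - 2 * (k₀ + 1)) = 0 := Nat.find_spec hexj
    have hrun : ∀ i : ℕ, i ≤ k₀ → u (m - 2 * i) ≠ 0 := by
      intro i hi
      match i with
      | 0 => simpa using hum
      | (i' + 1) =>
        have h1 : i' < k₀ := by omega
        have := Nat.find_min hexj h1
        simpa using this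
    set l₀ : ℤ := m - 2 * (k₀ : ℤ) with hl₀
    set R := Seg l₀ k₀ with hR
    have hmem_mR : m ∈ R := mem_Seg.mpr ⟨by omega, by omega, by omega⟩
    have hRsub : ∀ n ∈ R, u n ≠ 0 := by
      intro n hn
      obtain ⟨h1, h2, h3⟩ := mem_Seg.mp hn
      have h4 : 2 ∣ m - n := by omega
      obtain ⟨d, hd⟩ := h4
      have hd2 : ((d.toNat : ℕ) : ℤ) = d := by omega
      have := hrun d.toNat (by omega)
      rwa [show m - 2 * ((d.toNat : ℕ) : ℤ) = n by omega] at this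
    set v : ℤ →₀ ℕ := ⟨R, fun n => if n ∈ R then 1 else 0,
      fun a => by by_cases h : a ∈ R <;> simp [h]⟩ with hv
    set u' := u - v with hu'
    have hu'ap : ∀ n : ℤ, u' n = u n - (if n ∈ R then 1 else 0) := fun n => by
      rw [hu', Finsupp.tsub_apply]; rfl
    have hsplit : ∀ n : ℤ, u n = (if n ∈ R then 1 else 0) + u' n := by
      intro n
      rw [hu'ap]
      by_cases h : n ∈ R
      · have := hRsub n h
        simp only [if_pos h]
        omega
      · simp [h]
    have hu'le : ∀ n : ℤ, u' n ≤ u n := fun n => by rw [hu'ap]; omega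
    have hmass : (u'.sum fun _ v => v) < N := by
      rw [← hN]
      have hsub : u'.support ⊆ u.support := fun n hn => by
        rw [Finsupp.mem_support_iff] at hn ⊢
        intro h
        exact hn (by have := hu'le n; omega)
      calc (u'.sum fun _ v => v) = ∑ n ∈ u'.support, u' n := rfl
        _ = ∑ n ∈ u.support, u' n :=
            Finset.sum_subset hsub (fun x _ hx => Finsupp.notMem_support_iff.mp hx)
        _ < ∑ n ∈ u.support, u n := by
            refine Finset.sum_lt_sum (fun i _ => hu'le i) ⟨m, u.support.max'_mem hsupp, ?_⟩
            rw [hu'ap, if_pos hmem_mR]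
            omega
        _ = u.sum fun _ v => v := rfl
    obtain ⟨S', ⟨hS'seg, hS'sum, hS'ns⟩, hS'uniq⟩ := IH _ hmass u' rfl
    have hA : ∀ σ : Finset ℤ, (∀ n ∈ σ, u n ≠ 0 ∧ n ≤ m) → ¬ SpecialPosition σ R := by
      rw [hR, hl₀]
      exact notSpecial_top u m k₀ hgap
    have hcond : ∀ σ ∈ S', ∀ n ∈ σ, u n ≠ 0 ∧ n ≤ m := by
      intro σ hσ n hn
      have h1 : u' n ≠ 0 := mem_supp_of_mem hS'sum hσ hn
      have h2 : u n ≠ 0 := fun h => h1 (by have := hu'le n; omega)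
      exact ⟨h2, hmax n h2⟩
    refine ⟨R ::ₘ S', ⟨?_, ?_, ?_⟩, ?_⟩
    · intro σ hσ
      rcases Multiset.mem_cons.mp hσ with rfl | h
      · exact ⟨l₀, k₀, rfl⟩
      · exact hS'seg σ h
    · intro n
      rw [Multiset.map_cons, Multiset.sum_cons, hsplit n, hS'sum n]
    · intro σ₁ h₁ σ₂ h₂
      rcases Multiset.mem_cons.mp h₁ with rfl | h₁'
      · rcases Multiset.mem_cons.mp h₂ with rfl | h₂'
        · rintro ⟨-, hne, -⟩
          exact hne (Finset.union_self _)
        · exact fun h => hA σ₂ (hcond σ₂ h₂') (specialPosition_symm h)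
      · rcases Multiset.mem_cons.mp h₂ with rfl | h₂'
        · exact hA σ₁ (hcond σ₁ h₁')
        · exact hS'ns σ₁ h₁' σ₂ h₂'
    · rintro T ⟨hTseg, hTsum, hTns⟩
      have hRT : R ∈ T := by
        rw [hR, hl₀]
        exact R_mem u m k₀ hmax hrun hgap T hTseg hTsum hTns
      have hT' : T = R ::ₘ T.erase R := (Multiset.cons_erase hRT).symm
      have herase_sum : ∀ n : ℤ,
          u' n = ((T.erase R).map fun σ => if n ∈ σ then 1 else 0).sum := by
        intro n
        have h := hTsum n
        rw [hT', Multiset.map_cons, Multiset.sum_cons] at h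
        rw [hu'ap]
        omega
      have hkey : T.erase R = S' :=
        hS'uniq _ ⟨fun σ hσ => hTseg σ (Multiset.mem_of_mem_erase hσ), herase_sum,
          fun σ₁ h₁ σ₂ h₂ =>
            hTns σ₁ (Multiset.mem_of_mem_erase h₁) σ₂ (Multiset.mem_of_mem_erase h₂)⟩
      rw [hT', hkey]
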